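/- Let μ ≥ 0, δ ∈ (0,1), and let N ≥ 0 be a real number satisfying N ≥ μ − √(2·μ·log(1/δ)). Then max{0, N − √(2·N·log(1/δ))} ≥ max{0, μ − 2·√(2·μ·log(1/δ))}; that is, U₋(N,δ) ≥ Ū₋(μ,δ). -/
import Mathlib


open Real

/-- If `μ ≥ 0`, `δ ∈ (0,1)`, `N ≥ 0` and `N ≥ μ − √(2·μ·log(1/δ))`, then
`U₋(N,δ) = max{0, N − √(2·N·log(1/δ))} ≥ max{0, μ − 2·√(2·μ·log(1/δ))} = Ū₋(μ,δ)`. -/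
theorem Uminus_ge_UbarMinus (μ δ N : ℝ) (hμ : 0 ≤ μ) (hδ : δ ∈ Set.Ioo (0 : ℝ) 1) (hN : 0 ≤ N)
    (h : μ - Real.sqrt (2 * μ * Real.log (1 / δ)) ≤ N) :
    max 0 (μ - 2 * Real.sqrt (2 * μ * Real.log (1 / δ))) ≤
      max 0 (N - Real.sqrt (2 * N * Real.log (1 / δ))) := by
  obtain ⟨hδ0, hδ1⟩ := hδ
  set L := Real.log (1 / δ) with hLdef
  have hL : 0 < L := Real.log_pos ((one_lt_div hδ0).mpr (by linarith))
  set s := Real.sqrt (2 * μ * L) with hsdef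
  have hs0 : 0 ≤ s := Real.sqrt_nonneg _
  by_cases hc : μ - 2 * s ≤ 0
  · calc max 0 (μ - 2 * s) = 0 := max_eq_left hc
      _ ≤ max 0 (N - Real.sqrt (2 * N * L)) := le_max_left _ _
  · push_neg at hc
    have hμpos : 0 < μ := by nlinarith
    have hs2 : s ^ 2 = 2 * μ * L := Real.sq_sqrt (by positivity)
    have hspos : 0 < s := Real.sqrt_pos.mpr (by positivity)
    have hLs : L ≤ s := by nlinarith
    set t := N - (μ - s) with htdef
    have ht : 0 ≤ t := by simp [htdef]; linarith
    have key : Real.sqrt (2 * N * L) ≤ t + s := by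
      have h1 : 2 * N * L ≤ (t + s) ^ 2 := by nlinarith
      calc Real.sqrt (2 * N * L) ≤ Real.sqrt ((t + s) ^ 2) := Real.sqrt_le_sqrt h1
        _ = t + s := Real.sqrt_sq (by positivity)
    have : μ - 2 * s ≤ N - Real.sqrt (2 * N * L) := by
      have : N - (t + s) = μ - 2 * s := by simp [htdef]; ring
      linarith
    exact le_trans (max_le (le_trans hc.le this) this) (le_max_right _ _)
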